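/- For γ > 1/2, the integral ∫_{-∞}^{∞} (1 + t² y²)^{-1/2} (1 + |y - k|^γ)^{-1} dy tends to 0 as t → ∞, uniformly with respect to k ∈ ℝ. -/

import Mathlib

open Filter MeasureTheory
open Real

-- square of (1+|y|^γ)⁻¹ is integrable when γ > 1/2
lemma aux_sq_integrable (γ : ℝ) (hγ : 1 / 2 < γ) :
    Integrable (fun y : ℝ => ((1 + |y| ^ γ)⁻¹) ^ 2) := by
  have hγ0 : (0:ℝ) < γ := lt_trans one_half_pos hγ
  have h2γ : (Module.finrank ℝ ℝ : ℝ) < 2 * γ := by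
    simp [Module.finrank_self]; linarith
  have hint : Integrable (fun y : ℝ => ((2:ℝ) ^ γ) ^ 2 * (1 + ‖y‖) ^ (-(2 * γ))) :=
    (integrable_one_add_norm h2γ).const_mul _
  refine hint.mono' ?_ ?_
  · apply Continuous.aestronglyMeasurable
    have h1 : Continuous fun y : ℝ => 1 + |y| ^ γ := by
      apply continuous_const.add
      exact (continuous_abs).rpow_const (fun x => Or.inr hγ0.le)
    exact ((h1.inv₀ (fun y => by positivity)).pow 2)
  · refine Eventually.of_forall fun y => ?_
    have hb : (0:ℝ) < 1 + |y| ^ γ := by positivity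
    have hkey : (1 + |y| ^ γ)⁻¹ ≤ 2 ^ γ * (1 + |y|) ^ (-γ) := by
      have h1 : (1 + |y|) ^ γ ≤ 2 ^ γ * (1 + |y| ^ γ) := by
        have hm : (1:ℝ) + |y| ≤ 2 * max 1 |y| := by
          rcases le_total (|y|) 1 with h | h
          · have : max 1 |y| = 1 := max_eq_left h
            rw [this]; linarith
          · have : max 1 |y| = |y| := max_eq_right h
            rw [this]; linarith
        calc (1 + |y|) ^ γ ≤ (2 * max 1 |y|) ^ γ :=
              Real.rpow_le_rpow (by positivity) hm hγ0.le
          _ = 2 ^ γ * (max 1 |y|) ^ γ :=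
              Real.mul_rpow (by norm_num) (le_max_of_le_left zero_le_one)
          _ ≤ 2 ^ γ * (1 + |y| ^ γ) := by
              gcongr
              rcases le_total (|y|) 1 with h | h
              · rw [max_eq_left h, Real.one_rpow]
                have : (0:ℝ) ≤ |y| ^ γ := by positivity
                linarith
              · rw [max_eq_right h]
                have : (0:ℝ) ≤ 1 := zero_le_one
                linarith [Real.rpow_nonneg (abs_nonneg y) γ]
      have hbp : (0:ℝ) < (1 + |y|) ^ γ := by positivity
      rw [Real.rpow_neg (by positivity), ← one_div, ← one_div,
        mul_one_div, div_le_div_iff₀ hb hbp]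
      linarith
    have hsq : ((1 + |y| ^ γ)⁻¹) ^ 2 ≤ (2 ^ γ * (1 + |y|) ^ (-γ)) ^ 2 := by
      apply pow_le_pow_left₀ (by positivity) hkey
    rw [Real.norm_of_nonneg (by positivity)]
    refine hsq.trans_eq ?_
    rw [mul_pow]
    congr 1
    rw [sq, ← Real.rpow_add (by positivity)]
    norm_num [Real.norm_eq_abs]; ring_nf


/-- For `γ > 1/2`, `∫ (1 + t²y²)^{-1/2} (1 + |y-k|^γ)⁻¹ dy → 0` as `t → ∞`,
uniformly in `k ∈ ℝ`. -/
theorem rescaled_integral_tendsto_zero_uniformly (γ : ℝ) (hγ : 1 / 2 < γ) :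
    ∀ ε > (0:ℝ), ∃ T : ℝ, ∀ t ≥ T, ∀ k : ℝ,
      (∫ y : ℝ, (1 + t ^ 2 * y ^ 2) ^ (-(1:ℝ)/2) * (1 + |y - k| ^ γ)⁻¹) < ε := by
  intro ε hε
  have hγ0 : (0:ℝ) < γ := lt_trans one_half_pos hγ
  set C : ℝ := ∫ y : ℝ, ((1 + |y| ^ γ)⁻¹) ^ 2 with hCdef
  have hC0 : 0 ≤ C := integral_nonneg fun y => by positivity
  refine ⟨π * C / ε ^ 2 + 1, fun t ht k => ?_⟩
  have ht0 : 0 < t := lt_of_lt_of_le (by positivity) ht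
  set f : ℝ → ℝ := fun y => (1 + t ^ 2 * y ^ 2) ^ (-(1:ℝ)/2) with hfdef
  set g : ℝ → ℝ := fun y => (1 + |y - k| ^ γ)⁻¹ with hgdef
  -- measurability
  have hfc : Continuous f := by
    apply Continuous.rpow_const
    · continuity
    · intro x; left; positivity
  have hgc : Continuous g := by
    apply Continuous.inv₀
    · apply continuous_const.add
      exact (continuous_abs.comp (continuous_id.sub continuous_const)).rpow_const
        fun x => Or.inr hγ0.le
    · intro x; positivity
  -- f squared
  have hfsq : ∀ y : ℝ, f y ^ (2:ℝ) = (1 + (t * y) ^ 2)⁻¹ := by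
    intro y
    have hb : (0:ℝ) ≤ 1 + t ^ 2 * y ^ 2 := by positivity
    rw [hfdef]
    simp only
    rw [← Real.rpow_mul hb]
    norm_num [Real.rpow_neg_one, mul_pow]
  have hfsq' : ∀ y : ℝ, f y ^ 2 = (1 + (t * y) ^ 2)⁻¹ := by
    intro y
    rw [← Real.rpow_natCast (f y) 2]
    exact_mod_cast hfsq y
  have hgsq : ∀ y : ℝ, g y ^ (2:ℝ) = ((1 + |y - k| ^ γ)⁻¹) ^ 2 := by
    intro y
    rw [show (2:ℝ) = ((2:ℕ):ℝ) by norm_num, Real.rpow_natCast]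
  have hf2int : Integrable (fun y : ℝ => f y ^ 2) := by
    refine ((integrable_comp_mul_left_iff (fun x : ℝ => (1 + x ^ 2)⁻¹)
      ht0.ne').mpr integrable_inv_one_add_sq).congr (Eventually.of_forall fun y => ?_)
    exact (hfsq' y).symm
  have hg2int : Integrable (fun y : ℝ => g y ^ 2) :=
    (aux_sq_integrable γ hγ).comp_sub_right k
  have hof : ENNReal.ofReal (2:ℝ) = 2 := by norm_num
  have hfmem : MemLp f (ENNReal.ofReal 2) (volume : Measure ℝ) := by
    rw [hof]
    exact (memLp_two_iff_integrable_sq hfc.aestronglyMeasurable).mpr hf2int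
  have hgmem : MemLp g (ENNReal.ofReal 2) (volume : Measure ℝ) := by
    rw [hof]
    exact (memLp_two_iff_integrable_sq hgc.aestronglyMeasurable).mpr hg2int
  have h22 : Real.HolderConjugate 2 2 := Real.HolderConjugate.two_two
  have hkey := MeasureTheory.integral_mul_le_Lp_mul_Lq_of_nonneg h22
    (Eventually.of_forall (fun y : ℝ => by positivity : ∀ y, 0 ≤ f y))
    (Eventually.of_forall (fun y : ℝ => by positivity : ∀ y, 0 ≤ g y))
    hfmem hgmem
  have hIf : ∫ y : ℝ, f y ^ (2:ℝ) = t⁻¹ * π := by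
    calc ∫ y : ℝ, f y ^ (2:ℝ) = ∫ y : ℝ, (1 + (t * y) ^ 2)⁻¹ := by
          exact integral_congr_ae (Eventually.of_forall hfsq)
      _ = |t⁻¹| • ∫ x : ℝ, (1 + x ^ 2)⁻¹ :=
          MeasureTheory.Measure.integral_comp_mul_left (fun x : ℝ => (1 + x ^ 2)⁻¹) t
      _ = t⁻¹ * π := by
          rw [integral_univ_inv_one_add_sq, abs_of_pos (inv_pos.2 ht0), smul_eq_mul]
  have hIg : ∫ y : ℝ, g y ^ (2:ℝ) = C := by
    calc ∫ y : ℝ, g y ^ (2:ℝ) = ∫ y : ℝ, ((1 + |y - k| ^ γ)⁻¹) ^ 2 :=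
          integral_congr_ae (Eventually.of_forall hgsq)
      _ = C := MeasureTheory.integral_sub_right_eq_self
          (fun y : ℝ => ((1 + |y| ^ γ)⁻¹) ^ 2) k
  rw [hIf, hIg] at hkey
  have hnn : (0:ℝ) ≤ t⁻¹ * π := by positivity
  calc (∫ y : ℝ, (1 + t ^ 2 * y ^ 2) ^ (-(1:ℝ)/2) * (1 + |y - k| ^ γ)⁻¹)
      = ∫ y : ℝ, f y * g y := rfl
    _ ≤ (t⁻¹ * π) ^ ((1:ℝ)/2) * C ^ ((1:ℝ)/2) := hkey
    _ = Real.sqrt (t⁻¹ * π) * Real.sqrt C := by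
        rw [← Real.sqrt_eq_rpow, ← Real.sqrt_eq_rpow]
    _ = Real.sqrt (t⁻¹ * π * C) := (Real.sqrt_mul hnn C).symm
    _ < ε := by
        rw [Real.sqrt_lt' hε]
        have hdiv : t⁻¹ * π * C = π * C / t := by ring
        rw [hdiv, div_lt_iff₀ ht0]
        have h1 : π * C / ε ^ 2 * ε ^ 2 = π * C := div_mul_cancel₀ _ (by positivity)
        nlinarith [mul_le_mul_of_nonneg_left ht (sq_nonneg ε)]
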